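/- Let (E₁, E₂, Φ) be a τ-stable triple and τ' defined by r₁τ + r₂τ' = deg E₁ + deg E₂. Then (1) τ > μ(E₁), (2) τ' < μ(E₂), and (3) τ − τ' > 0. Equivalently, for σ-stability: σ > μ(E₁) − μ(E₂) and σ > 0. -/

import Mathlib

open CategoryTheory CategoryTheory.Limits

noncomputable section

/-- Slope `d/r` of a bundle of degree `d` and rank `r`. -/
def bslope (d : ℤ) (r : ℕ) : ℝ := (d : ℝ) / (r : ℝ)

/-- The quantity `θ_τ(T')` for a subtriple with ranks `r1', r2'` and degrees `d1', d2'`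
of a triple with ranks `r1, r2` and degrees `d1, d2`. -/
def thetaTau (τ : ℝ) (r1 r2 : ℕ) (d1 d2 : ℤ) (r1' r2' : ℕ) (d1' d2' : ℤ) : ℝ :=
  (bslope (d1' + d2') (r1' + r2') - τ) -
    ((r2' : ℝ) / (r2 : ℝ)) * (((r1 : ℝ) + (r2 : ℝ)) / ((r1' : ℝ) + (r2' : ℝ))) *
      (bslope (d1 + d2) (r1 + r2) - τ)

universe v u

variable {C : Type u} [Category.{v} C] [Abelian C]

/-- `(E1', E2')` is a subtriple of `(E1, E2, Φ)` : `Φ` maps `E2'` into `E1'`. -/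
def IsSubtriple {E1 E2 : C} (Φ : E2 ⟶ E1) (E1' : Subobject E1) (E2' : Subobject E2) : Prop :=
  E1'.Factors (E2'.arrow ≫ Φ)

/-- `θ_τ` of a subtriple, expressed through rank and degree functions. -/
def theta (rank : C → ℕ) (deg : C → ℤ) (E1 E2 : C) (τ : ℝ)
    (E1' : Subobject E1) (E2' : Subobject E2) : ℝ :=
  thetaTau τ (rank E1) (rank E2) (deg E1) (deg E2)
    (rank (E1' : C)) (rank (E2' : C)) (deg (E1' : C)) (deg (E2' : C))

/-- τ-stability of the holomorphic triple `(E1, E2, Φ)`. -/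
def TStable (rank : C → ℕ) (deg : C → ℤ) (E1 E2 : C) (Φ : E2 ⟶ E1) (τ : ℝ) : Prop :=
  ∀ (E1' : Subobject E1) (E2' : Subobject E2), IsSubtriple Φ E1' E2' →
    ¬(E1' = ⊥ ∧ E2' = ⊥) → ¬(E1' = ⊤ ∧ E2' = ⊤) →
    theta rank deg E1 E2 τ E1' E2' < 0

/-- τ-semistability of the holomorphic triple `(E1, E2, Φ)`. -/
def TSemistable (rank : C → ℕ) (deg : C → ℤ) (E1 E2 : C) (Φ : E2 ⟶ E1) (τ : ℝ) : Prop :=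
  ∀ (E1' : Subobject E1) (E2' : Subobject E2), IsSubtriple Φ E1' E2' →
    ¬(E1' = ⊥ ∧ E2' = ⊥) → ¬(E1' = ⊤ ∧ E2' = ⊤) →
    theta rank deg E1 E2 τ E1' E2' ≤ 0

/-- Slope stability for a single bundle. -/
def BStable (rank : C → ℕ) (deg : C → ℤ) (B : C) : Prop :=
  ∀ X : Subobject B, X ≠ ⊥ → X ≠ ⊤ →
    bslope (deg (X : C)) (rank (X : C)) < bslope (deg B) (rank B)

/-- Slope semistability for a single bundle. -/
def BSemistable (rank : C → ℕ) (deg : C → ℤ) (B : C) : Prop :=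
  ∀ X : Subobject B, X ≠ ⊥ →
    bslope (deg (X : C)) (rank (X : C)) ≤ bslope (deg B) (rank B)


/-- Core arithmetic: clearing denominators in `θ_τ < 0`. -/
lemma key_arith (τ τ' r1 r2 r1' r2' d1 d2 d1' d2' : ℝ)
    (h2 : 0 < r2) (hr1 : 0 ≤ r1) (hpos : 0 < r1' + r2')
    (hττ' : r1 * τ + r2 * τ' = d1 + d2)
    (h : (d1' + d2') / (r1' + r2') - τ -
        (r2' / r2) * ((r1 + r2) / (r1' + r2')) * ((d1 + d2) / (r1 + r2) - τ) < 0) :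
    d1' + d2' < r1' * τ + r2' * τ' := by
  have hr12 : 0 < r1 + r2 := by linarith
  have heq : (d1' + d2') / (r1' + r2') - τ -
      (r2' / r2) * ((r1 + r2) / (r1' + r2')) * ((d1 + d2) / (r1 + r2) - τ)
      = (d1' + d2' - r1' * τ - r2' * τ') / (r1' + r2') := by
    rw [← hττ']
    field_simp
    ring
  rw [heq, div_neg_iff] at h
  rcases h with ⟨h, _⟩ | ⟨h, _⟩
  · linarith
  · linarith

/-- `thetaTau` version of `key_arith`. -/
lemma key_theta (τ τ' : ℝ) (r1 r2 r1' r2' : ℕ) (d1 d2 d1' d2' : ℤ)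
    (h2 : 0 < r2) (hpos : 0 < r1' + r2')
    (hττ' : (r1 : ℝ) * τ + (r2 : ℝ) * τ' = (d1 : ℝ) + (d2 : ℝ))
    (h : thetaTau τ r1 r2 d1 d2 r1' r2' d1' d2' < 0) :
    (d1' : ℝ) + (d2' : ℝ) < (r1' : ℝ) * τ + (r2' : ℝ) * τ' := by
  have hr2 : (0 : ℝ) < r2 := by exact_mod_cast h2
  have hpos' : (0 : ℝ) < (r1' : ℝ) + (r2' : ℝ) := by exact_mod_cast hpos
  apply key_arith τ τ' r1 r2 r1' r2' d1 d2 d1' d2' hr2 (Nat.cast_nonneg _) hpos' hττ'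
  unfold thetaTau bslope at h
  push_cast at h
  convert h using 2

/-- The cokernel of the kernel inclusion is the image (coimage = image in abelian cats). -/
noncomputable def cokerKernelIsoImage {E1 E2 : C} (Φ : E2 ⟶ E1) :
    cokernel (kernelSubobject Φ).arrow ≅ ((imageSubobject Φ : Subobject E1) : C) :=
  (cokernelIsoOfEq (kernelSubobject_arrow Φ).symm).trans <|
    (cokernelEpiComp (kernelSubobjectIso Φ).hom (kernel.ι Φ)).trans <|
      (Abelian.coimageIsoImage' Φ).trans (imageSubobjectIso Φ).symm

/-- constraints on the parameters of a `τ`-stable triple: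
`τ > μ(E₁)`, `τ' < μ(E₂)`, `τ − τ' > 0`; equivalently `σ > μ(E₁) − μ(E₂)` and `σ > 0`. -/
theorem parameter_bounds_of_tStable
    (rank : C → ℕ) (deg : C → ℤ) (E1 E2 : C) (Φ : E2 ⟶ E1) (τ τ' : ℝ)
    (hrank_bot : ∀ (B : C) (X : Subobject B), X = ⊥ ↔ rank (X : C) = 0)
    (hrank_top : ∀ B : C, rank ((⊤ : Subobject B) : C) = rank B)
    (hdeg_top : ∀ B : C, deg ((⊤ : Subobject B) : C) = deg B)
    (hrank_add : ∀ (B : C) (X : Subobject B), rank B = rank (X : C) + rank (cokernel X.arrow))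
    (hdeg_add : ∀ (B : C) (X : Subobject B), deg B = deg (X : C) + deg (cokernel X.arrow))
    (hiso : ∀ A B : C, Nonempty (A ≅ B) → rank A = rank B ∧ deg A = deg B)
    (h1 : 0 < rank E1) (h2 : 0 < rank E2)
    (hττ' : (rank E1 : ℝ) * τ + (rank E2 : ℝ) * τ' = (deg E1 : ℝ) + (deg E2 : ℝ))
    (hst : TStable rank deg E1 E2 Φ τ) :
    (bslope (deg E1) (rank E1) < τ ∧ τ' < bslope (deg E2) (rank E2) ∧ 0 < τ - τ') ∧
      (∀ σ : ℝ,
        σ = (((rank E1 : ℝ) + (rank E2 : ℝ)) * τ - ((deg E1 : ℝ) + (deg E2 : ℝ))) /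
              (rank E2 : ℝ) →
        bslope (deg E1) (rank E1) - bslope (deg E2) (rank E2) < σ ∧ 0 < σ) := by
  classical
  -- basic rank/degree facts
  have hbotr : ∀ B : C, rank ((⊥ : Subobject B) : C) = 0 := fun B => (hrank_bot B ⊥).mp rfl
  have hbotd : ∀ B : C, deg ((⊥ : Subobject B) : C) = 0 := by
    intro B
    have h := hdeg_add B ⊥
    have h2' := (hiso (cokernel (⊥ : Subobject B).arrow) B
      ⟨(cokernelIsoOfEq Subobject.bot_arrow).trans cokernelZeroIsoTarget⟩).2
    omega
  have htopbot : ∀ B : C, 0 < rank B → (⊤ : Subobject B) ≠ ⊥ := by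
    intro B hB hb
    have h := (hrank_bot B ⊤).mp hb
    rw [hrank_top] at h
    omega
  have hr1R : (0 : ℝ) < rank E1 := by exact_mod_cast h1
  have hr2R : (0 : ℝ) < rank E2 := by exact_mod_cast h2
  -- (1) : deg E1 < rank E1 * τ, via the subtriple (⊤, ⊥)
  have fact1 : (deg E1 : ℝ) < (rank E1 : ℝ) * τ := by
    have hθ := hst ⊤ ⊥ (Subobject.top_factors _)
      (fun hc => htopbot E1 h1 hc.1) (fun hc => htopbot E2 h2 hc.2.symm)
    rw [theta, hrank_top, hdeg_top, hbotr, hbotd] at hθ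
    have hk := key_theta τ τ' (rank E1) (rank E2) (rank E1) 0 (deg E1) (deg E2) (deg E1) 0
      h2 (by omega) hττ' hθ
    push_cast at hk
    linarith
  -- (2) : rank E2 * τ' < deg E2
  have fact2 : (rank E2 : ℝ) * τ' < (deg E2 : ℝ) := by linarith
  -- the kernel and image of Φ
  have hqiso := hiso (cokernel (kernelSubobject Φ).arrow)
    ((imageSubobject Φ : Subobject E1) : C) ⟨cokerKernelIsoImage Φ⟩
  have hrsum : rank E2 = rank ((kernelSubobject Φ : Subobject E2) : C) +
      rank ((imageSubobject Φ : Subobject E1) : C) := by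
    rw [hrank_add E2 (kernelSubobject Φ), hqiso.1]
  have hdsum : deg E2 = deg ((kernelSubobject Φ : Subobject E2) : C) +
      deg ((imageSubobject Φ : Subobject E1) : C) := by
    rw [hdeg_add E2 (kernelSubobject Φ), hqiso.2]
  -- deg K ≤ rank K * τ', via the subtriple (⊥, K)
  have factK : (deg ((kernelSubobject Φ : Subobject E2) : C) : ℝ) ≤
      (rank ((kernelSubobject Φ : Subobject E2) : C) : ℝ) * τ' := by
    rcases eq_or_ne (kernelSubobject Φ) (⊥ : Subobject E2) with hK | hK
    · rw [hK, hbotr, hbotd]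
      simp
    · have hsub : IsSubtriple Φ (⊥ : Subobject E1) (kernelSubobject Φ) := by
        rw [IsSubtriple, kernelSubobject_arrow_comp]
        exact (Subobject.factors_iff _ _).mpr ⟨0, by simp; exact zero_comp⟩
      have hθ := hst ⊥ (kernelSubobject Φ) hsub
        (fun hc => hK hc.2) (fun hc => htopbot E1 h1 hc.1.symm)
      rw [theta, hbotr, hbotd] at hθ
      have hKr : rank ((kernelSubobject Φ : Subobject E2) : C) ≠ 0 := by
        intro h0
        exact hK ((hrank_bot E2 (kernelSubobject Φ)).mpr h0)
      have hk := key_theta τ τ' (rank E1) (rank E2) 0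
        (rank ((kernelSubobject Φ : Subobject E2) : C)) (deg E1) (deg E2) 0
        (deg ((kernelSubobject Φ : Subobject E2) : C)) h2 (by omega) hττ' hθ
      push_cast at hk
      linarith
  -- rank I * τ' < deg I
  have hrsumR : (rank ((kernelSubobject Φ : Subobject E2) : C) : ℝ) +
      (rank ((imageSubobject Φ : Subobject E1) : C) : ℝ) = (rank E2 : ℝ) := by
    exact_mod_cast hrsum.symm
  have hdsumR : (deg ((kernelSubobject Φ : Subobject E2) : C) : ℝ) +
      (deg ((imageSubobject Φ : Subobject E1) : C) : ℝ) = (deg E2 : ℝ) := by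
    exact_mod_cast hdsum.symm
  have hrt : (rank ((kernelSubobject Φ : Subobject E2) : C) : ℝ) * τ' +
      (rank ((imageSubobject Φ : Subobject E1) : C) : ℝ) * τ' = (rank E2 : ℝ) * τ' := by
    rw [← add_mul, hrsumR]
  have factI : (rank ((imageSubobject Φ : Subobject E1) : C) : ℝ) * τ' <
      (deg ((imageSubobject Φ : Subobject E1) : C) : ℝ) := by linarith
  -- (3) : 0 < τ - τ'
  have claim3 : 0 < τ - τ' := by
    rcases eq_or_ne (imageSubobject Φ) (⊤ : Subobject E1) with hI | hI
    · rw [hI, hrank_top, hdeg_top] at factI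
      by_contra hcon
      push_neg at hcon
      have : (rank E1 : ℝ) * τ ≤ (rank E1 : ℝ) * τ' :=
        mul_le_mul_of_nonneg_left (by linarith) hr1R.le
      linarith
    · have hsub : IsSubtriple Φ (imageSubobject Φ) (⊤ : Subobject E2) :=
        (Subobject.factors_iff _ _).mpr
          ⟨(⊤ : Subobject E2).arrow ≫ factorThruImageSubobject Φ, by simp⟩
      have hθ := hst (imageSubobject Φ) ⊤ hsub
        (fun hc => htopbot E2 h2 hc.2) (fun hc => hI hc.1)
      rw [theta, hrank_top, hdeg_top] at hθ
      have hk := key_theta τ τ' (rank E1) (rank E2)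
        (rank ((imageSubobject Φ : Subobject E1) : C)) (rank E2)
        (deg E1) (deg E2) (deg ((imageSubobject Φ : Subobject E1) : C)) (deg E2)
        h2 (by omega) hττ' hθ
      by_contra hcon
      push_neg at hcon
      have : (rank ((imageSubobject Φ : Subobject E1) : C) : ℝ) * τ ≤
          (rank ((imageSubobject Φ : Subobject E1) : C) : ℝ) * τ' :=
        mul_le_mul_of_nonneg_left (by linarith) (Nat.cast_nonneg _)
      linarith
  have claim1 : bslope (deg E1) (rank E1) < τ := by
    rw [bslope, div_lt_iff₀ hr1R]
    linarith
  have claim2 : τ' < bslope (deg E2) (rank E2) := by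
    rw [bslope, lt_div_iff₀ hr2R]
    linarith
  refine ⟨⟨claim1, claim2, claim3⟩, ?_⟩
  intro σ hσ
  have hστ : σ = τ - τ' := by
    rw [hσ, div_eq_iff (ne_of_gt hr2R)]
    linarith
  rw [hστ]
  exact ⟨by linarith, claim3⟩
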